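/- If R is a right noetherian and left P-injective ring, then the Jacobson radical of R is nilpotent. -/

import Mathlib

open MulOpposite in
/-- Right ideals of `R`, as submodules of `R` over `Rᵐᵒᵖ`. -/
abbrev RIdeal (R : Type*) [Ring R] := Submodule Rᵐᵒᵖ R

section Defs
variable (R : Type*) [Ring R]

/-- Left annihilator of a subset. -/
def lAnn (X : Set R) : Set R := {a | ∀ x ∈ X, a * x = 0}

/-- Right annihilator of a subset. -/
def rAnn (X : Set R) : Set R := {a | ∀ x ∈ X, x * a = 0}

/-- Right annihilator of a subset, as a right ideal. -/
def rAnnI (X : Set R) : RIdeal R where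
  carrier := rAnn R X
  add_mem' := by intro a b ha hb x hx; rw [mul_add, ha x hx, hb x hx, add_zero]
  zero_mem' := by intro x hx; rw [mul_zero]
  smul_mem' := by
    intro c a ha x hx
    show x * (a * c.unop) = 0
    rw [← mul_assoc, ha x hx, zero_mul]

/-- `R` is left P-injective: `rl(a) = aR` for every `a`. -/
def IsLeftPInjective : Prop :=
  ∀ a x : R, (∀ u : R, u * a = 0 → u * x = 0) ↔ ∃ s : R, x = a * s

/-- `R` is left 2-injective. -/
def IsLeft2Injective : Prop :=
  ∀ (a b : R) (f : ↥(Submodule.span R ({a, b} : Set R)) →ₗ[R] R),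
    ∃ g : R →ₗ[R] R, ∀ x : ↥(Submodule.span R ({a, b} : Set R)), g (x : R) = f x

/-- `R` is left FP-injective: every matrix ring over `R` is left P-injective. -/
def IsLeftFPInjective : Prop :=
  ∀ n : ℕ, IsLeftPInjective (Matrix (Fin n) (Fin n) R)

/-- A left ideal is small if `K + I = R` implies `K = R`. -/
def IsSmallLeftIdeal (I : Ideal R) : Prop := ∀ K : Ideal R, K ⊔ I = ⊤ → K = ⊤

/-- A complement left ideal: maximal with respect to intersecting some left ideal trivially. -/
def IsComplementLeftIdeal (C : Ideal R) : Prop :=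
  ∃ S : Ideal R, C ⊓ S = ⊥ ∧ ∀ C' : Ideal R, C ≤ C' → C' ⊓ S = ⊥ → C' = C

/-- A right ideal is essential in `R`. -/
def IsEssentialRIdeal (I : RIdeal R) : Prop := ∀ K : RIdeal R, K ⊓ I = ⊥ → K = ⊥

/-- The right socle: the sum of all simple (minimal) right ideals. -/
def rSocle : RIdeal R := sSup {m : RIdeal R | IsSimpleModule Rᵐᵒᵖ m}

/-- The right singular ideal. -/
def rSingular : Set R := {a | IsEssentialRIdeal R (rAnnI R {a})}

/-- ACC on right annihilators. -/
def ACCOnRightAnnihilators : Prop :=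
  ∀ f : ℕ → Set R, (∀ n, ∃ X : Set R, f n = rAnn R X) → (∀ n, f n ⊆ f (n + 1)) →
    ∃ n, ∀ m, n ≤ m → f m = f n

/-- The Jacobson radical, as a set. -/
def jacobsonSet : Set R := (TwoSidedIdeal.jacobson (⊥ : TwoSidedIdeal R) : Set R)

/-- A subset is nilpotent if products of some fixed length of its elements vanish. -/
def IsNilpotentSet (J : Set R) : Prop :=
  ∃ n : ℕ, ∀ f : Fin (n + 1) → R, (∀ i, f i ∈ J) → (List.ofFn f).prod = 0

/-- `R` is quasi-Frobenius: left noetherian and left self-injective. -/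
def IsQuasiFrobenius : Prop := IsNoetherianRing R ∧ Module.Injective R R

/-- `R` is right mininjective. -/
def IsRightMininjective : Prop :=
  ∀ (I : RIdeal R), IsSimpleModule Rᵐᵒᵖ I → ∀ f : I →ₗ[Rᵐᵒᵖ] R,
    ∃ c : R, ∀ x : I, f x = c * (x : R)

/-- `R` is left mininjective. -/
def IsLeftMininjective : Prop :=
  ∀ (I : Ideal R), IsSimpleModule R I → ∀ f : I →ₗ[R] R,
    ∃ c : R, ∀ x : I, f x = (x : R) * c

/-- `R` is right simple injective. -/
def IsRightSimpleInjective : Prop :=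
  ∀ (I : RIdeal R) (f : I →ₗ[Rᵐᵒᵖ] R), IsSimpleModule Rᵐᵒᵖ (LinearMap.range f) →
    ∃ c : R, ∀ x : I, f x = c * (x : R)

/-- `R` is left CS: every left ideal is essential in a direct summand of `R`. -/
def IsLeftCS : Prop :=
  ∀ I : Ideal R, ∃ K : Ideal R, (∃ K' : Ideal R, IsCompl K K') ∧ I ≤ K ∧
    ∀ L : Ideal R, L ≤ K → L ⊓ I = ⊥ → L = ⊥

/-- `R` is left min-CS: every minimal left ideal is essential in a direct summand. -/
def IsLeftMinCS : Prop :=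
  ∀ I : Ideal R, IsSimpleModule R I → ∃ K : Ideal R, (∃ K' : Ideal R, IsCompl K K') ∧ I ≤ K ∧
    ∀ L : Ideal R, L ≤ K → L ⊓ I = ⊥ → L = ⊥

/-- `R` is right Johns: right noetherian and every right ideal is a right annihilator. -/
def IsRightJohns : Prop :=
  IsNoetherianRing Rᵐᵒᵖ ∧ ∀ I : RIdeal R, ∃ X : Set R, (I : Set R) = rAnn R X

end Defs

section MoreDefs
variable (R : Type*) [Ring R]

/-- Left annihilator of a subset, as a left ideal. -/
def lAnnI (X : Set R) : Ideal R where
  carrier := lAnn R X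
  add_mem' := by intro a b ha hb x hx; rw [add_mul, ha x hx, hb x hx, add_zero]
  zero_mem' := by intro x hx; rw [zero_mul]
  smul_mem' := by
    intro c a ha x hx
    show c * a * x = 0
    rw [mul_assoc, ha x hx, mul_zero]

/-- A left ideal is essential in `R`. -/
def IsEssentialLIdeal (I : Ideal R) : Prop := ∀ K : Ideal R, K ⊓ I = ⊥ → K = ⊥

/-- The left singular ideal `Z_l`. -/
def lSingular : Set R := {a | IsEssentialLIdeal R (lAnnI R {a})}

end MoreDefs


section Stmt3Aux
open MulOpposite
variable {R : Type*} [Ring R]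

private lemma stmt3_mem_jac {a : R} :
    a ∈ jacobsonSet R ↔ a ∈ TwoSidedIdeal.jacobson (⊥ : TwoSidedIdeal R) :=
  Iff.rfl

private lemma stmt3_isUnit_add_one {x : R} (hx : x ∈ jacobsonSet R) : IsUnit (x + 1) := by
  rw [stmt3_mem_jac] at hx
  have key : ∀ y : R, y ∈ TwoSidedIdeal.jacobson (⊥ : TwoSidedIdeal R) →
      ∃ z : R, z * (y + 1) = 1 := by
    intro y hy
    obtain ⟨z, hz⟩ := TwoSidedIdeal.mem_jacobson_iff.mp hy 1
    rw [TwoSidedIdeal.mem_bot, sub_eq_zero] at hz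
    refine ⟨z, ?_⟩
    rw [mul_add, mul_one]
    rw [mul_one] at hz
    linear_combination (norm := noncomm_ring) hz
  obtain ⟨z, hz⟩ := key x hx
  have hz' : z = -(z * x) + 1 := by
    rw [mul_add, mul_one] at hz
    linear_combination (norm := noncomm_ring) hz
  have hzx : -(z * x) ∈ TwoSidedIdeal.jacobson (⊥ : TwoSidedIdeal R) :=
    TwoSidedIdeal.neg_mem _ ((TwoSidedIdeal.jacobson ⊥).mul_mem_left z x hx)
  obtain ⟨w, hw⟩ := key _ hzx
  rw [← hz'] at hw
  have hwt : w = x + 1 := by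
    calc w = w * (z * (x + 1)) := by rw [hz, mul_one]
    _ = (w * z) * (x + 1) := by rw [mul_assoc]
    _ = x + 1 := by rw [hw, one_mul]
  exact ⟨⟨x + 1, z, by rw [← hwt, hw], hz⟩, rfl⟩

private lemma stmt3_jac_mul_right {a : R} (ha : a ∈ jacobsonSet R) (s : R) :
    a * s ∈ jacobsonSet R :=
  stmt3_mem_jac.mpr ((TwoSidedIdeal.jacobson ⊥).mul_mem_right a s (stmt3_mem_jac.mp ha))

private lemma stmt3_jac_mul_left (r : R) {a : R} (ha : a ∈ jacobsonSet R) :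
    r * a ∈ jacobsonSet R :=
  stmt3_mem_jac.mpr ((TwoSidedIdeal.jacobson ⊥).mul_mem_left r a (stmt3_mem_jac.mp ha))

private lemma stmt3_isUnit_one_sub {a : R} (ha : a ∈ jacobsonSet R) (s : R) :
    IsUnit (1 - a * s) := by
  have h1 : -(a * s) ∈ jacobsonSet R :=
    stmt3_mem_jac.mpr (TwoSidedIdeal.neg_mem _ (stmt3_mem_jac.mp (stmt3_jac_mul_right ha s)))
  have h2 := stmt3_isUnit_add_one h1
  rwa [neg_add_eq_sub] at h2

/-- Essentiality of the left annihilator of an element of `J`: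
for `a ∈ J` and `y ≠ 0` there is `u` with `u*y ≠ 0` and `u*y*a = 0`. -/
private lemma stmt3_ess (hP : IsLeftPInjective R) {a : R} (ha : a ∈ jacobsonSet R)
    {y : R} (hy : y ≠ 0) : ∃ u : R, u * y ≠ 0 ∧ u * y * a = 0 := by
  by_contra hcon
  push_neg at hcon
  obtain ⟨s, hs⟩ := (hP (y * a) y).mp (by
    intro u hu
    by_contra hne
    exact hcon u hne (by rw [mul_assoc]; exact hu))
  have hy0 : y * (1 - a * s) = 0 := by
    rw [mul_sub, mul_one, ← mul_assoc, ← hs, sub_self]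
  obtain ⟨v, hv⟩ := (stmt3_isUnit_one_sub ha s).exists_right_inv
  apply hy
  calc y = y * ((1 - a * s) * v) := by rw [hv, mul_one]
  _ = (y * (1 - a * s)) * v := by rw [mul_assoc]
  _ = 0 := by rw [hy0, zero_mul]

private lemma stmt3_split_last (k : ℕ) (l : List R) (h : l.length = k + 1) :
    ∃ (m : List R) (j : R), m.length = k ∧ (∀ x ∈ m, x ∈ l) ∧ j ∈ l ∧
      l.prod = m.prod * j := by
  have hne : l ≠ [] := by intro e; rw [e] at h; simp at h
  refine ⟨l.dropLast, l.getLast hne, ?_, ?_, List.getLast_mem hne, ?_⟩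
  · rw [List.length_dropLast, h]; omega
  · intro x hx; exact (List.dropLast_sublist l).subset hx
  · conv_lhs => rw [← List.dropLast_append_getLast hne]
    simp

/-- The left annihilator of all `k`-fold products of elements of `J`,
as a right ideal (it is in fact two-sided since `J` is). -/
private def stmt3W (R : Type*) [Ring R] (k : ℕ) : Submodule Rᵐᵒᵖ R where
  carrier := {u | ∀ l : List R, l.length = k →
    (∀ x ∈ l, x ∈ jacobsonSet R) → u * l.prod = 0}
  add_mem' := by
    intro a b ha hb l h1 h2
    rw [add_mul, ha l h1 h2, hb l h1 h2, add_zero]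
  zero_mem' := by intro l h1 h2; rw [zero_mul]
  smul_mem' := by
    intro c u hu l h1 h2
    show (u * c.unop) * l.prod = 0
    cases l with
    | nil =>
      have h0 := hu [] h1 (by intro x hx; cases hx)
      simp only [List.prod_nil, mul_one] at h0
      simp [h0]
    | cons x xs =>
      have key := hu ((c.unop * x) :: xs) (by simpa using h1) (by
        intro w hw
        rcases List.mem_cons.mp hw with h | h
        · rw [h]; exact stmt3_jac_mul_left c.unop (h2 x List.mem_cons_self)
        · exact h2 w (List.mem_cons_of_mem _ h))
      simp only [List.prod_cons, mul_assoc] at key ⊢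
      exact key

private lemma stmt3_mem_W {k : ℕ} {u : R} :
    u ∈ stmt3W R k ↔ ∀ l : List R, l.length = k →
      (∀ x ∈ l, x ∈ jacobsonSet R) → u * l.prod = 0 :=
  Iff.rfl

private lemma stmt3_W_le_succ (k : ℕ) : stmt3W R k ≤ stmt3W R (k + 1) := by
  intro u hu
  rw [stmt3_mem_W] at hu ⊢
  intro l hlen hmem
  obtain ⟨m, j, hmlen, hmsub, hjmem, hprod⟩ := stmt3_split_last k l hlen
  rw [hprod, ← mul_assoc, hu m hmlen (fun x hx => hmem x (hmsub x hx)), zero_mul]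

private noncomputable def stmt3_eOp (R : Type*) [Ring R] : Rᵐᵒᵖ ≃ₗ[Rᵐᵒᵖ] R where
  toFun := unop
  invFun := op
  map_add' := fun _ _ => rfl
  map_smul' := fun _ _ => rfl
  left_inv := fun _ => rfl
  right_inv := fun _ => rfl

private lemma stmt3_noeth [IsNoetherianRing Rᵐᵒᵖ] : IsNoetherian Rᵐᵒᵖ R :=
  isNoetherian_of_linearEquiv (stmt3_eOp R)

private lemma stmt3_mem_rAnnI {z x : R} : x ∈ rAnnI R {z} ↔ z * x = 0 := by
  constructor
  · intro h; exact h z rfl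
  · intro h w hw
    rw [Set.eq_of_mem_singleton hw]
    exact h

/-- Key step: if the chain `stmt3W` stabilizes at `K`, then all `K`-fold products
of elements of `J` vanish. -/
private lemma stmt3_key [IsNoetherianRing Rᵐᵒᵖ] (hP : IsLeftPInjective R) {K : ℕ}
    (hstab : stmt3W R K = stmt3W R (K + 1)) :
    ∀ l : List R, l.length = K → (∀ x ∈ l, x ∈ jacobsonSet R) → l.prod = 0 := by
  by_contra hcon
  push_neg at hcon
  obtain ⟨l₀, hl₀len, hl₀mem, hl₀ne⟩ := hcon
  set S : Set (Submodule Rᵐᵒᵖ R) := {I | ∃ z : R, z ∉ stmt3W R K ∧ I = rAnnI R {z}} with hS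
  have hSne : S.Nonempty := by
    refine ⟨rAnnI R {1}, 1, ?_, rfl⟩
    intro h1
    exact hl₀ne (by simpa using stmt3_mem_W.mp h1 l₀ hl₀len hl₀mem)
  obtain ⟨I, hImem, hImax⟩ := (set_has_maximal_iff_noetherian.mpr stmt3_noeth) S hSne
  obtain ⟨z, hz, rfl⟩ := hImem
  apply hz
  rw [hstab, stmt3_mem_W]
  intro l hlen hmem
  obtain ⟨m, j, hmlen, hmsub, hjmem, hprod⟩ := stmt3_split_last K l hlen
  rw [hprod, ← mul_assoc]
  by_cases h0 : z * m.prod = 0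
  · rw [h0, zero_mul]
  · obtain ⟨u, hu1, hu2⟩ := stmt3_ess hP (hmem j hjmem) h0
    have hmJ : ∀ x ∈ m, x ∈ jacobsonSet R := fun x hx => hmem x (hmsub x hx)
    have huzW : u * z ∉ stmt3W R K := by
      intro hin
      apply hu1
      have h3 := stmt3_mem_W.mp hin m hmlen hmJ
      rwa [mul_assoc] at h3
    have hle : rAnnI R {z} ≤ rAnnI R {u * z} := by
      intro x hx
      have hzx : z * x = 0 := stmt3_mem_rAnnI.mp hx
      exact stmt3_mem_rAnnI.mpr (by rw [mul_assoc, hzx, mul_zero])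
    have heq : rAnnI R {u * z} = rAnnI R {z} := by
      by_contra hne'
      exact hImax _ ⟨u * z, huzW, rfl⟩ (lt_of_le_of_ne hle (fun e => hne' e.symm))
    have hjr : m.prod * j ∈ rAnnI R {u * z} := by
      refine stmt3_mem_rAnnI.mpr ?_
      calc (u * z) * (m.prod * j) = u * (z * m.prod) * j := by
            rw [← mul_assoc, mul_assoc u z]
      _ = 0 := hu2
    rw [heq] at hjr
    have h4 := stmt3_mem_rAnnI.mp hjr
    rwa [← mul_assoc] at h4

end Stmt3Aux

/-- Right noetherian left P-injective: `J` is nilpotent. -/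
theorem stmt3 {R : Type*} [Ring R] [IsNoetherianRing Rᵐᵒᵖ] (hP : IsLeftPInjective R) :
    IsNilpotentSet R (jacobsonSet R) := by
  haveI hN : IsNoetherian Rᵐᵒᵖ R := stmt3_noeth
  obtain ⟨K, hK⟩ := monotone_stabilizes_iff_noetherian.mpr hN
    ⟨stmt3W R, monotone_nat_of_le_succ stmt3_W_le_succ⟩
  have hstab : stmt3W R K = stmt3W R (K + 1) := hK (K + 1) (Nat.le_succ K)
  have hkey := stmt3_key hP hstab
  refine ⟨K, ?_⟩
  intro f hf
  have hlen : (List.ofFn f).length = K + 1 := by simp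
  obtain ⟨m, j, hmlen, hmsub, hjmem, hprod⟩ := stmt3_split_last K _ hlen
  have hmJ : ∀ x ∈ m, x ∈ jacobsonSet R := by
    intro x hx
    obtain ⟨i, rfl⟩ := List.mem_ofFn.mp (hmsub x hx)
    exact hf i
  rw [hprod, hkey m hmlen hmJ, zero_mul]
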